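/- Suppose every load bus is connected to some source bus by a path of lines of total resistance at most R_max, and let 0 < V_tr < V0. Let v be a voltage profile with v_k = V0 at all sources, v_k ≥ V_tr for all loads, and v_κ = V_tr for at least one load κ ∈ L. Then G(v) ≥ (V_tr − V0)²/(2·R_max) + p_Σ·log V_tr. -/

import Mathlib

open Finset

/-- Full voltage profile on buses `S ⊕ L`: every source bus is held at `V0`,
load bus `k` is at `vL k`. -/
def fullV {S L : Type*} (V0 : ℝ) (vL : L → ℝ) : S ⊕ L → ℝ :=
  Sum.elim (fun _ => V0) vL

/-- Resistive co-content
`G(v) = Σ_α (v_{α₁} - v_{α₂})²/(2 R_α) + Σ_k p_k log v_k`. -/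
noncomputable def cocontent {S L E : Type*} [Fintype L] [Fintype E]
    (e1 e2 : E → S ⊕ L) (R : E → ℝ) (p : L → ℝ) (V0 : ℝ) (vL : L → ℝ) : ℝ :=
  (∑ α, (fullV (S := S) V0 vL (e1 α) - fullV (S := S) V0 vL (e2 α)) ^ 2 / (2 * R α))
    + ∑ k, p k * Real.log (vL k)

/-- There is a path of lines (each traversed in either direction) joining the
load bus `k` to some source bus, whose total resistance is at most `Rmax`. -/
def pathToSource {S L E : Type*} [Fintype E]
    (e1 e2 : E → S ⊕ L) (R : E → ℝ) (Rmax : ℝ) (k : L) : Prop :=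
  ∃ (n : ℕ) (b : Fin (n + 1) → S ⊕ L) (ed : Fin n → E),
    b 0 = Sum.inr k ∧ (∃ s : S, b (Fin.last n) = Sum.inl s) ∧
    (∀ i : Fin n,
      (e1 (ed i) = b i.castSucc ∧ e2 (ed i) = b i.succ) ∨
      (e1 (ed i) = b i.succ ∧ e2 (ed i) = b i.castSucc)) ∧
    (∑ i, R (ed i)) ≤ Rmax

/-- `vL` is a critical point of the co-content `G` with respect to the load
voltages: all load voltages are positive and `∂G/∂v_k = 0` for every load `k`. -/
noncomputable def isCritPt {S L E : Type*} [Fintype E] [Fintype L]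
    [DecidableEq S] [DecidableEq L]
    (e1 e2 : E → S ⊕ L) (R : E → ℝ) (p : L → ℝ) (V0 : ℝ) (vL : L → ℝ) : Prop :=
  (∀ k, 0 < vL k) ∧
  ∀ k : L,
    (∑ α, ((if e1 α = Sum.inr k then (1 : ℝ) else 0)
        - (if e2 α = Sum.inr k then 1 else 0))
      * (fullV (S := S) V0 vL (e1 α) - fullV (S := S) V0 vL (e2 α)) / R α)
    + p k / vL k = 0

/-- High-voltage solution of `v (V0 - v) = R p`. -/
noncomputable def Vhigh (V0 R p : ℝ) : ℝ :=
  V0 / 2 * (1 + Real.sqrt (1 - p / (V0 ^ 2 / (4 * R))))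

/-- Low-voltage solution of `v (V0 - v) = R p`. -/
noncomputable def Vlow (V0 R p : ℝ) : ℝ :=
  V0 / 2 * (1 - Real.sqrt (1 - p / (V0 ^ 2 / (4 * R))))

/-- Line-current derivative expressed through the state:
`di_α/dt = (-R_α i_α + v_{α₁} - v_{α₂}) / L_α`. -/
noncomputable def idotF {S L E : Type*} (e1 e2 : E → S ⊕ L) (R Lind : E → ℝ)
    (V0 : ℝ) (i : E → ℝ) (vL : L → ℝ) (α : E) : ℝ :=
  (-R α * i α + fullV (S := S) V0 vL (e1 α) - fullV (S := S) V0 vL (e2 α)) / Lind α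

/-- Load-voltage derivative expressed through the state:
`dv_k/dt = (-p_k/v_k - (net current leaving bus k)) / C_k`. -/
noncomputable def vdotF {S L E : Type*} [Fintype E] [DecidableEq S] [DecidableEq L]
    (e1 e2 : E → S ⊕ L) (C p : L → ℝ) (i : E → ℝ) (vL : L → ℝ) (k : L) : ℝ :=
  (-(p k / vL k)
    - ∑ α, ((if e1 α = Sum.inr k then (1 : ℝ) else 0)
        - (if e2 α = Sum.inr k then 1 else 0)) * i α) / C k

/-- Brayton–Moser potential
`P(x) = G(v) + Σ_α ((τmax - τ_α)/2) L_α (di_α/dt)² + (τmax/2) Σ_k C_k (dv_k/dt)²`,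
with the time derivatives expressed through the state via the dynamics. -/
noncomputable def BMpot {S L E : Type*} [Fintype L] [Fintype E]
    [DecidableEq S] [DecidableEq L]
    (e1 e2 : E → S ⊕ L) (R Lind : E → ℝ) (C p : L → ℝ) (V0 τmax : ℝ)
    (i : E → ℝ) (vL : L → ℝ) : ℝ :=
  cocontent e1 e2 R p V0 vL
    + (∑ α, (τmax - Lind α / R α) / 2 * Lind α * (idotF e1 e2 R Lind V0 i vL α) ^ 2)
    + τmax / 2 * ∑ k, C k * (vdotF e1 e2 C p i vL k) ^ 2


section Walks
variable {S L E : Type*} (e1 e2 : E → S ⊕ L)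

def IsWalk : (S ⊕ L) → List E → (S ⊕ L) → Prop
  | x, [], y => x = y
  | x, a :: es, y =>
      (e1 a = x ∧ IsWalk (e2 a) es y) ∨ (e2 a = x ∧ IsWalk (e1 a) es y)

lemma isWalk_append {u : List E} :
    ∀ {x y : S ⊕ L} {t : List E}, IsWalk e1 e2 x (u ++ t) y ↔
      ∃ m, IsWalk e1 e2 x u m ∧ IsWalk e1 e2 m t y := by
  induction u with
  | nil =>
      intro x y t
      constructor
      · intro h; exact ⟨x, rfl, h⟩
      · rintro ⟨m, hm, ht⟩; cases hm; exact ht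
  | cons a u ih =>
      intro x y t
      constructor
      · rintro (⟨h1, h2⟩ | ⟨h1, h2⟩)
        · obtain ⟨m, hm, ht⟩ := ih.mp h2
          exact ⟨m, Or.inl ⟨h1, hm⟩, ht⟩
        · obtain ⟨m, hm, ht⟩ := ih.mp h2
          exact ⟨m, Or.inr ⟨h1, hm⟩, ht⟩
      · rintro ⟨m, (⟨h1, h2⟩ | ⟨h1, h2⟩), ht⟩
        · exact Or.inl ⟨h1, ih.mpr ⟨m, h2, ht⟩⟩
        · exact Or.inr ⟨h1, ih.mpr ⟨m, h2, ht⟩⟩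

lemma walk_erase [DecidableEq E] (R : E → ℝ) (hR : ∀ a, 0 ≤ R a) :
    ∀ (es : List E) (x y : S ⊕ L), IsWalk e1 e2 x es y →
      ∃ es' : List E, es'.Nodup ∧ (∀ b ∈ es', b ∈ es) ∧
        (es'.map R).sum ≤ (es.map R).sum ∧ IsWalk e1 e2 x es' y := by
  intro es
  induction es with
  | nil => intro x y h; exact ⟨[], List.nodup_nil, by simp, le_refl _, h⟩
  | cons a es ih =>
      intro x y h
      have hsum0 : ∀ (l : List E), 0 ≤ (l.map R).sum := by
        intro l; apply List.sum_nonneg; intro b hb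
        obtain ⟨c, _, rfl⟩ := List.mem_map.mp hb; exact hR c
      -- the walk starts with edge a from x to z
      obtain (⟨h1, h2⟩ | ⟨h1, h2⟩) := h
      all_goals {
        obtain ⟨es', hnd, hmem, hle, hw⟩ := ih _ _ h2
        by_cases hain : a ∈ es'
        case neg =>
          refine ⟨a :: es', List.nodup_cons.mpr ⟨hain, hnd⟩, ?_, ?_, ?_⟩
          · intro b hb; rcases List.mem_cons.mp hb with rfl | hb
            · exact List.mem_cons_self
            · exact List.mem_cons_of_mem _ (hmem b hb)
          · simpa using add_le_add_left hle (R a)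
          · first
            | exact Or.inl ⟨h1, hw⟩
            | exact Or.inr ⟨h1, hw⟩
        case pos =>
          obtain ⟨u, w, rfl⟩ := List.append_of_mem hain
          have hnd' := hnd
          rw [List.nodup_append] at hnd'
          obtain ⟨hu, hw', hdisj⟩ := hnd'
          have haw : a ∉ w := (List.nodup_cons.mp hw').1
          have hwnd : w.Nodup := (List.nodup_cons.mp hw').2
          obtain ⟨m, hm1, hm2⟩ := (isWalk_append e1 e2).mp hw
          have hsums : (w.map R).sum ≤ (es.map R).sum ∧
              R a + (w.map R).sum ≤ R a + (es.map R).sum := by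
            constructor
            · calc (w.map R).sum ≤ (u.map R).sum + (R a + (w.map R).sum) := by
                    have := hsum0 u; have := hR a; linarith
                _ = ((u ++ a :: w).map R).sum := by simp
                _ ≤ _ := hle
            · have : (w.map R).sum ≤ (es.map R).sum := by
                calc (w.map R).sum ≤ (u.map R).sum + (R a + (w.map R).sum) := by
                      have := hsum0 u; have := hR a; linarith
                  _ = ((u ++ a :: w).map R).sum := by simp
                  _ ≤ _ := hle
              linarith
          obtain (⟨g1, g2⟩ | ⟨g1, g2⟩) := hm2
          -- inner edge a traversed from e1 a = m to e2 a
          · -- case analysis on outer orientation via h1 : e1 a = x (or e2 a = x)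
            first
            | -- outer: e1 a = x. m = e1 a = x, walk x (a::w) y
              refine ⟨a :: w, List.nodup_cons.mpr ⟨haw, hwnd⟩, ?_, ?_,
                Or.inl ⟨h1, g2⟩⟩
              · intro b hb; rcases List.mem_cons.mp hb with rfl | hb
                · exact List.mem_cons_self
                · exact List.mem_cons_of_mem _ (hmem b (by simp [hb]))
              · simpa using hsums.2
            | -- outer: e2 a = x. inner continues from e2 a = x via w
              refine ⟨w, hwnd, ?_, ?_, ?_⟩
              · intro b hb
                exact List.mem_cons_of_mem _ (hmem b (by simp [hb]))
              · have := hsums.1; have := hR a; simp; linarith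
              · rw [← h1]; exact g2
          · first
            | -- outer: e1 a = x; inner continues from e1 a = x via w
              refine ⟨w, hwnd, ?_, ?_, ?_⟩
              · intro b hb
                exact List.mem_cons_of_mem _ (hmem b (by simp [hb]))
              · have := hsums.1; have := hR a; simp; linarith
              · rw [← h1]; exact g2
            | -- outer: e2 a = x = m; walk x (a::w) y
              refine ⟨a :: w, List.nodup_cons.mpr ⟨haw, hwnd⟩, ?_, ?_,
                Or.inr ⟨h1, g2⟩⟩
              · intro b hb; rcases List.mem_cons.mp hb with rfl | hb
                · exact List.mem_cons_self
                · exact List.mem_cons_of_mem _ (hmem b (by simp [hb]))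
              · simpa using hsums.2
      }

lemma walk_abs (v : S ⊕ L → ℝ) :
    ∀ (es : List E) (x y : S ⊕ L), IsWalk e1 e2 x es y →
      |v x - v y| ≤ (es.map (fun a => |v (e1 a) - v (e2 a)|)).sum := by
  intro es
  induction es with
  | nil => rintro x y rfl; simp
  | cons a es ih =>
      rintro x y (⟨h1, h2⟩ | ⟨h1, h2⟩) <;>
        simp only [List.map_cons, List.sum_cons] <;> rw [← h1]
      · have := ih _ _ h2
        have tri := abs_sub_le (v (e1 a)) (v (e2 a)) (v y)
        linarith
      · have := ih _ _ h2
        have tri := abs_sub_le (v (e2 a)) (v (e1 a)) (v y)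
        rw [abs_sub_comm (v (e2 a)) (v (e1 a))] at tri
        linarith

lemma walk_ofFn :
    ∀ (n : ℕ) (b : Fin (n + 1) → S ⊕ L) (ed : Fin n → E),
      (∀ i : Fin n,
        (e1 (ed i) = b i.castSucc ∧ e2 (ed i) = b i.succ) ∨
        (e1 (ed i) = b i.succ ∧ e2 (ed i) = b i.castSucc)) →
      IsWalk e1 e2 (b 0) (List.ofFn ed) (b (Fin.last n)) := by
  intro n
  induction n with
  | zero =>
      intro b ed _
      simp only [List.ofFn_zero]
      show b 0 = b (Fin.last 0)
      congr
  | succ n ih =>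
      intro b ed hadj
      rw [List.ofFn_succ]
      have key := ih (b ∘ Fin.succ) (ed ∘ Fin.succ) ?_
      · have hlast : (b ∘ Fin.succ) (Fin.last n) = b (Fin.last (n + 1)) := by
          simp [Fin.succ_last]
        have h0 : (b ∘ Fin.succ) 0 = b 1 := rfl
        rw [hlast, h0] at key
        have hofn : List.ofFn (ed ∘ Fin.succ) = List.ofFn (fun i : Fin n => ed i.succ) := rfl
        rw [hofn] at key
        obtain (⟨h1, h2⟩ | ⟨h1, h2⟩) := hadj 0
        · exact Or.inl ⟨by simpa using h1, by rw [h2]; simpa using key⟩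
        · exact Or.inr ⟨by simpa using h2, by rw [h1]; simpa using key⟩
      · intro i
        have hcs : i.succ.castSucc = Fin.succ i.castSucc := by ext; simp
        obtain (⟨h1, h2⟩ | ⟨h1, h2⟩) := hadj i.succ
        · left
          refine ⟨?_, ?_⟩
          · show e1 (ed i.succ) = b (Fin.succ i.castSucc)
            rw [h1, hcs]
          · show e2 (ed i.succ) = b (Fin.succ i.succ)
            rw [h2]
        · right
          refine ⟨?_, ?_⟩
          · show e1 (ed i.succ) = b (Fin.succ i.succ)
            rw [h1]
          · show e2 (ed i.succ) = b (Fin.succ i.castSucc)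
            rw [h2, hcs]

end Walks

/-- If every load bus is connected to some source by a path of total
resistance at most `Rmax`, `0 < V_tr < V0`, all load voltages are at least
`V_tr`, and some load bus `κ` has voltage exactly `V_tr`, then
`G(v) ≥ (V_tr - V0)²/(2 Rmax) + p_Σ log V_tr`. -/
theorem stmt_9 {S L E : Type*} [Fintype S] [Fintype L] [Fintype E]
    (e1 e2 : E → S ⊕ L) (R : E → ℝ) (hR : ∀ α, 0 < R α)
    (V0 Rmax Vtr : ℝ) (hV0 : 0 < V0) (hVtr : 0 < Vtr) (hVtrV0 : Vtr < V0)
    (p : L → ℝ) (hp : ∀ k, 0 ≤ p k)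
    (hpath : ∀ k : L, pathToSource e1 e2 R Rmax k)
    (vL : L → ℝ) (hge : ∀ k, Vtr ≤ vL k) (κ : L) (hκ : vL κ = Vtr) :
    (Vtr - V0) ^ 2 / (2 * Rmax) + (∑ k, p k) * Real.log Vtr ≤
      cocontent e1 e2 R p V0 vL := by
  classical
  obtain ⟨n, b, ed, hb0, ⟨s, hbl⟩, hadj, hsum⟩ := hpath κ
  set v : S ⊕ L → ℝ := fullV (S := S) V0 vL with hv
  have hwalk := walk_ofFn e1 e2 n b ed hadj
  rw [hb0, hbl] at hwalk
  have hn : n ≠ 0 := by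
    rintro rfl
    have : b (Fin.last 0) = b 0 := rfl
    rw [hb0, hbl] at this
    simp at this
  obtain ⟨m, rfl⟩ := Nat.exists_eq_succ_of_ne_zero hn
  have hRmax : 0 < Rmax :=
    lt_of_lt_of_le (Finset.sum_pos (fun i _ => hR (ed i)) Finset.univ_nonempty) hsum
  have hsum_list : ((List.ofFn ed).map R).sum ≤ Rmax := by
    rw [List.map_ofFn, List.sum_ofFn]
    exact hsum
  obtain ⟨es, hnd, hmem, hle, hw⟩ :=
    walk_erase e1 e2 R (fun a => (hR a).le) _ _ _ hwalk
  have hesR : (es.map R).sum ≤ Rmax := le_trans hle hsum_list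
  have hesne : es ≠ [] := by
    rintro rfl
    have : (Sum.inr κ : S ⊕ L) = Sum.inl s := hw
    simp at this
  set T : Finset E := es.toFinset with hT
  have hTne : T.Nonempty := by
    rw [hT]
    obtain ⟨a, ha⟩ := List.exists_mem_of_ne_nil es hesne
    exact ⟨a, List.mem_toFinset.mpr ha⟩
  set Δ : E → ℝ := fun a => v (e1 a) - v (e2 a) with hΔ
  -- telescoping bound along the walk
  have habs : |v (Sum.inr κ) - v (Sum.inl s)| ≤ ∑ a ∈ T, |Δ a| := by
    have h1 := walk_abs e1 e2 v es _ _ hw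
    have h2 : ∑ a ∈ T, |Δ a| = (es.map (fun a => |Δ a|)).sum :=
      List.sum_toFinset _ hnd
    rw [h2]
    exact h1
  have hvκ : v (Sum.inr κ) = Vtr := by simp [hv, fullV, hκ]
  have hvs : v (Sum.inl s) = V0 := rfl
  rw [hvκ, hvs] at habs
  -- Cauchy–Schwarz (Sedrakyan)
  have hsed : (∑ a ∈ T, |Δ a|) ^ 2 / (∑ a ∈ T, R a) ≤ ∑ a ∈ T, Δ a ^ 2 / R a := by
    have := Finset.sq_sum_div_le_sum_sq_div T (fun a => |Δ a|)
      (g := R) (fun a _ => hR a)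
    simpa [sq_abs] using this
  have hTR_pos : 0 < ∑ a ∈ T, R a :=
    Finset.sum_pos (fun a _ => hR a) hTne
  have hTR_le : (∑ a ∈ T, R a) ≤ Rmax := by
    have : ∑ a ∈ T, R a = (es.map R).sum := List.sum_toFinset _ hnd
    rw [this]; exact hesR
  have hCnonneg : ∀ a : E, 0 ≤ Δ a ^ 2 / R a :=
    fun a => div_nonneg (sq_nonneg _) (hR a).le
  have hCle : ∑ a ∈ T, Δ a ^ 2 / R a ≤ ∑ a : E, Δ a ^ 2 / R a :=
    Finset.sum_le_sum_of_subset_of_nonneg (Finset.subset_univ T)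
      (fun a _ _ => hCnonneg a)
  have hA2 : (Vtr - V0) ^ 2 ≤ (∑ a ∈ T, |Δ a|) ^ 2 := by
    rw [← sq_abs (Vtr - V0)]
    exact pow_le_pow_left₀ (abs_nonneg _) habs 2
  have hkey : (Vtr - V0) ^ 2 ≤ Rmax * ∑ a : E, Δ a ^ 2 / R a := by
    have h3 : (∑ a ∈ T, |Δ a|) ^ 2 ≤ (∑ a ∈ T, R a) * (∑ a ∈ T, Δ a ^ 2 / R a) := by
      rw [← div_le_iff₀' hTR_pos] at *
      exact hsed
    have h4 : (∑ a ∈ T, R a) * (∑ a ∈ T, Δ a ^ 2 / R a) ≤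
        Rmax * ∑ a : E, Δ a ^ 2 / R a := by
      have hCn : 0 ≤ ∑ a ∈ T, Δ a ^ 2 / R a := Finset.sum_nonneg fun a _ => hCnonneg a
      exact mul_le_mul hTR_le hCle hCn hRmax.le
    linarith
  -- first piece of the cocontent
  have hfirst : (Vtr - V0) ^ 2 / (2 * Rmax) ≤ ∑ α, Δ α ^ 2 / (2 * R α) := by
    have heq : ∑ α, Δ α ^ 2 / (2 * R α) = (∑ α : E, Δ α ^ 2 / R α) / 2 := by
      rw [Finset.sum_div]
      refine Finset.sum_congr rfl fun α _ => ?_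
      rw [div_div, mul_comm]
    rw [heq, div_le_div_iff₀ (by positivity) two_pos]
    calc (Vtr - V0) ^ 2 * 2 ≤ (Rmax * ∑ a : E, Δ a ^ 2 / R a) * 2 := by linarith
      _ = (∑ a : E, Δ a ^ 2 / R a) * (2 * Rmax) := by ring
  -- second piece
  have hsecond : (∑ k, p k) * Real.log Vtr ≤ ∑ k, p k * Real.log (vL k) := by
    rw [Finset.sum_mul]
    refine Finset.sum_le_sum fun k _ => ?_
    exact mul_le_mul_of_nonneg_left (Real.log_le_log hVtr (hge k)) (hp k)
  have : cocontent e1 e2 R p V0 vL =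
      (∑ α, Δ α ^ 2 / (2 * R α)) + ∑ k, p k * Real.log (vL k) := rfl
  rw [this]
  exact add_le_add hfirst hsecond
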